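/- Let G = (V,E) be an undirected graph with V = {1,…,n}, with a propositional variable p_e for every edge e, and for each vertex i let ψ_i = ⋀{ p_e : e = {i,j} ∈ E and i < j } ∧ ⋀{ p̄_e : e = {i,j} ∈ E and i > j }. Let F₃ be the frame with four worlds {r, a, b, c} and accessibility relation {(r,a), (r,b), (r,c)} (a root with exactly three successor leaves). Then the formula f(G) = ⋀_{i=1}^n ◇ψ_i is satisfiable in the frame F₃ (true at some world of some model based on F₃) if and only if G is 3-colorable, i.e., there is a coloring of V with three colors such that adjacent vertices receive different colors. -/

import Mathlib

namespace PoorMansModal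

/-- Modal formulas over propositional variables of type `α`: variables `p`,
negated variables `p̄`, general negation, conjunction, disjunction, box, diamond,
and the constants `true` and `false`. -/
inductive Fml (α : Type) : Type where
  | var : α → Fml α
  | nvar : α → Fml α
  | neg : Fml α → Fml α
  | and : Fml α → Fml α → Fml α
  | or : Fml α → Fml α → Fml α
  | box : Fml α → Fml α
  | dia : Fml α → Fml α
  | tru : Fml α
  | fls : Fml α

/-- A Kripke model: a nonempty set of worlds, an accessibility relation, and a valuation. -/
structure Kripke (α : Type) where
  World : Type
  nonempty : Nonempty World
  R : World → World → Prop
  V : α → World → Prop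

/-- Truth of a formula at a world of a model. -/
def Sat {α : Type} (M : Kripke α) : Fml α → M.World → Prop
  | .var p, w => M.V p w
  | .nvar p, w => ¬ M.V p w
  | .neg φ, w => ¬ Sat M φ w
  | .and φ ψ, w => Sat M φ w ∧ Sat M ψ w
  | .or φ ψ, w => Sat M φ w ∨ Sat M ψ w
  | .box φ, w => ∀ v, M.R w v → Sat M φ v
  | .dia φ, w => ∃ v, M.R w v ∧ Sat M φ v
  | .tru, _ => True
  | .fls, _ => False

/-- Modal depth: depth of nesting of `□` and `◇`. -/
def mdep {α : Type} : Fml α → ℕ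
  | .var _ => 0
  | .nvar _ => 0
  | .neg φ => mdep φ
  | .and φ ψ => max (mdep φ) (mdep ψ)
  | .or φ ψ => max (mdep φ) (mdep ψ)
  | .box φ => mdep φ + 1
  | .dia φ => mdep φ + 1
  | .tru => 0
  | .fls => 0

/-- Conjunction of a list of formulas; the empty conjunction is the always-true formula. -/
def bigConj {α : Type} : List (Fml α) → Fml α
  | [] => .tru
  | [φ] => φ
  | φ :: rest => .and φ (bigConj rest)

/-- `□^k φ`. -/
def boxI {α : Type} : ℕ → Fml α → Fml α
  | 0, φ => φ
  | k + 1, φ => .box (boxI k φ)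

/-- `◇^k φ`. -/
def diaI {α : Type} : ℕ → Fml α → Fml α
  | 0, φ => φ
  | k + 1, φ => .dia (diaI k φ)

/-- `(◇□)^k φ`. -/
def diaBoxI {α : Type} : ℕ → Fml α → Fml α
  | 0, φ => φ
  | k + 1, φ => .dia (.box (diaBoxI k φ))

/-- The literal with variable `l.1` and sign `l.2` (`true` = positive). -/
def litF {α : Type} (l : α × Bool) : Fml α := if l.2 then .var l.1 else .nvar l.1

/-- The variable `p` occurs in the formula. -/
def occursV {α : Type} (p : α) : Fml α → Prop
  | .var q => p = q
  | .nvar q => p = q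
  | .neg φ => occursV p φ
  | .and φ ψ => occursV p φ ∨ occursV p ψ
  | .or φ ψ => occursV p φ ∨ occursV p ψ
  | .box φ => occursV p φ
  | .dia φ => occursV p φ
  | .tru => False
  | .fls => False

/-- Poor man's formulas: built from literals, `∧`, `□`, `◇` only. -/
def PoorF {α : Type} : Fml α → Prop
  | .var _ => True
  | .nvar _ => True
  | .and φ ψ => PoorF φ ∧ PoorF ψ
  | .box φ => PoorF φ
  | .dia φ => PoorF φ
  | _ => False

/-- Formulas of the language `L`: built from literals, `∧`, `∨`, `□`, `◇`. -/
def InL {α : Type} : Fml α → Prop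
  | .var _ => True
  | .nvar _ => True
  | .and φ ψ => InL φ ∧ InL ψ
  | .or φ ψ => InL φ ∧ InL ψ
  | .box φ => InL φ
  | .dia φ => InL φ
  | _ => False

/-- Every world has at most one successor. -/
def AtMostOne {W : Type} (R : W → W → Prop) : Prop :=
  ∀ w v v', R w v → R w v' → v = v'

/-- Every world has at least one successor. -/
def AtLeastOne {W : Type} (R : W → W → Prop) : Prop :=
  ∀ w, ∃ v, R w v

/-- Every world has at most two successors. -/
def AtMostTwo {W : Type} (R : W → W → Prop) : Prop :=
  ∀ w v₁ v₂ v₃, R w v₁ → R w v₂ → R w v₃ → v₁ = v₂ ∨ v₁ = v₃ ∨ v₂ = v₃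

/-- `chainR R n w v`: there is an `R`-path of length exactly `n` from `w` to `v`. -/
def chainR {W : Type} (R : W → W → Prop) : ℕ → W → W → Prop
  | 0, w, v => w = v
  | k + 1, w, v => ∃ u, R w u ∧ chainR R k u v

/-- `R` is the parent-child relation of a rooted tree with root `root`
in which every node has at most two children. -/
structure IsBinTree {W : Type} (R : W → W → Prop) (root : W) : Prop where
  reach : ∀ w, Relation.ReflTransGen R root w
  root_no_parent : ∀ w, ¬ R w root
  unique_parent : ∀ w v v', R v w → R v' w → v = v'
  acyclic : ∀ w, ¬ Relation.TransGen R w w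
  at_most_two_children : ∀ w v₁ v₂ v₃, R w v₁ → R w v₂ → R w v₃ → v₁ = v₂ ∨ v₁ = v₃ ∨ v₂ = v₃

/-- `φ_exp = ⋀_{i=1}^n □^{i-1}(◇□^{n-i} p_i ∧ ◇□^{n-i} p̄_i)`, with `p_i = var i`. -/
def phiExp (n : ℕ) : Fml ℕ :=
  bigConj ((List.range n).map (fun j =>
    boxI j (.and (.dia (boxI (n - 1 - j) (.var (j + 1))))
                 (.dia (boxI (n - 1 - j) (.nvar (j + 1)))))))

/-- Satisfiability with respect to the class of all frames. -/
def SatAll (φ : Fml ℕ) : Prop := ∃ (M : Kripke ℕ) (w : M.World), Sat M φ w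

/-- Satisfiability with respect to `F≤1`. -/
def SatLe1 (φ : Fml ℕ) : Prop := ∃ M : Kripke ℕ, AtMostOne M.R ∧ ∃ w, Sat M φ w

/-- Satisfiability with respect to `F≥1`. -/
def SatGe1 (φ : Fml ℕ) : Prop := ∃ M : Kripke ℕ, AtLeastOne M.R ∧ ∃ w, Sat M φ w

/-- Satisfiability with respect to `F≤2`. -/
def SatLe2 (φ : Fml ℕ) : Prop := ∃ M : Kripke ℕ, AtMostTwo M.R ∧ ∃ w, Sat M φ w

/-- A one-world model with no successors, realizing the boolean assignment `v`;
truth at its world is propositional truth for formulas without modal operators. -/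
def propModel (v : ℕ → Bool) : Kripke ℕ :=
  { World := Unit, nonempty := ⟨()⟩, R := fun _ _ => False, V := fun p _ => v p = true }

/-- Propositional satisfaction of `φ` under the assignment `v`. -/
def PropSat (v : ℕ → Bool) (φ : Fml ℕ) : Prop := Sat (propModel v) φ ()


/-- The formula `ψ_i` for a vertex `i` of a graph `G`: the conjunction of the variables
`p_e` for edges `e = {i,j}` with `i < j` and of the negated variables `p̄_e` for edges
`e = {i,j}` with `i > j`. -/
noncomputable def psiV {n : ℕ} (G : SimpleGraph (Fin n)) [DecidableRel G.Adj] (i : Fin n) :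
    Fml (Sym2 (Fin n)) :=
  bigConj
    (((Finset.univ.filter (fun j => G.Adj i j ∧ i < j)).toList.map
        (fun j => Fml.var s(i, j))) ++
     ((Finset.univ.filter (fun j => G.Adj i j ∧ j < i)).toList.map
        (fun j => Fml.nvar s(i, j))))

/-- The frame `F₃`: a root `0` with exactly the three successor leaves `1`, `2`, `3`. -/
def F3R : Fin 4 → Fin 4 → Prop := fun w v => w = 0 ∧ v ≠ 0


theorem sat_bigConj {α : Type} (M : Kripke α) (w : M.World) :
    ∀ l : List (Fml α), Sat M (bigConj l) w ↔ ∀ φ ∈ l, Sat M φ w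
  | [] => by simp [bigConj, Sat]
  | [φ] => by simp [bigConj]
  | φ :: ψ :: rest => by
      have h := sat_bigConj M w (ψ :: rest)
      simp only [bigConj, Sat, h, List.mem_cons]
      constructor
      · rintro ⟨h1, h2⟩ χ (rfl | hχ)
        · exact h1
        · exact h2 χ hχ
      · intro h
        exact ⟨h φ (Or.inl rfl), fun χ hχ => h χ (Or.inr hχ)⟩

theorem sat_psiV {n : ℕ} (G : SimpleGraph (Fin n)) [DecidableRel G.Adj]
    (i : Fin n) (M : Kripke (Sym2 (Fin n))) (w : M.World) :
    Sat M (psiV G i) w ↔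
      (∀ j, G.Adj i j → i < j → M.V s(i, j) w) ∧
      (∀ j, G.Adj i j → j < i → ¬ M.V s(i, j) w) := by
  unfold psiV
  rw [sat_bigConj]
  simp only [List.mem_append, List.mem_map, Finset.mem_toList, Finset.mem_filter,
    Finset.mem_univ, true_and]
  constructor
  · intro h
    constructor
    · intro j hadj hlt
      have := h (Fml.var s(i, j)) (Or.inl ⟨j, ⟨hadj, hlt⟩, rfl⟩)
      exact this
    · intro j hadj hlt
      have := h (Fml.nvar s(i, j)) (Or.inr ⟨j, ⟨hadj, hlt⟩, rfl⟩)
      exact this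
  · rintro ⟨h1, h2⟩ φ (⟨j, ⟨hadj, hlt⟩, rfl⟩ | ⟨j, ⟨hadj, hlt⟩, rfl⟩)
    · exact h1 j hadj hlt
    · exact h2 j hadj hlt

/-- Uniqueness of the ordered representation of an edge. -/
theorem sym2_eq_of_lt {n : ℕ} {i j i' j' : Fin n} (h1 : i < j) (h2 : i' < j')
    (h : s(i, j) = s(i', j')) : i = i' ∧ j = j' := by
  rw [Sym2.eq_iff] at h
  rcases h with ⟨rfl, rfl⟩ | ⟨rfl, rfl⟩
  · exact ⟨rfl, rfl⟩
  · exact absurd (h1.trans h2) (lt_irrefl _)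

/-- `f(G) = ⋀_{i=1}^n ◇ψ_i` is satisfiable in the frame `F₃`
(a root with exactly three successor leaves) iff `G` is 3-colorable. -/
theorem stmt3 (n : ℕ) (G : SimpleGraph (Fin n)) [DecidableRel G.Adj] :
    (∃ (V : Sym2 (Fin n) → Fin 4 → Prop) (w : Fin 4),
        Sat (Kripke.mk (Fin 4) ⟨0⟩ F3R V)
          (bigConj ((List.finRange n).map (fun i => Fml.dia (psiV G i)))) w) ↔
      ∃ c : Fin n → Fin 3, ∀ i j : Fin n, G.Adj i j → c i ≠ c j := by
  constructor
  · rintro ⟨V, w, hw⟩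
    set M : Kripke (Sym2 (Fin n)) := Kripke.mk (Fin 4) ⟨0⟩ F3R V with hM
    rw [sat_bigConj] at hw
    have hex : ∀ i : Fin n, ∃ v : Fin 4, v ≠ 0 ∧ Sat M (psiV G i) v := by
      intro i
      have := hw (Fml.dia (psiV G i))
        (List.mem_map.mpr ⟨i, List.mem_finRange i, rfl⟩)
      obtain ⟨v, ⟨_, hv0⟩, hv⟩ := this
      exact ⟨v, hv0, hv⟩
    choose s hs0 hsat using hex
    refine ⟨fun i => ⟨(s i).val - 1, by omega⟩, fun i j hadj hc => ?_⟩
    have hsij : s i = s j := by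
      have hi := (s i).isLt; have hj := (s j).isLt
      have hi0 : (s i).val ≠ 0 := fun h => hs0 i (Fin.ext h)
      have hj0 : (s j).val ≠ 0 := fun h => hs0 j (Fin.ext h)
      have := congrArg Fin.val hc
      simp only at this
      exact Fin.ext (by omega)
    rcases lt_trichotomy i j with hlt | heq | hlt
    · have h1 := ((sat_psiV G i M (s i)).mp (hsat i)).1 j hadj hlt
      have h2 := ((sat_psiV G j M (s j)).mp (hsat j)).2 i hadj.symm hlt
      rw [Sym2.eq_swap] at h2
      exact h2 (hsij ▸ h1)
    · exact G.loopless.irrefl i (heq ▸ hadj)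
    · have h1 := ((sat_psiV G j M (s j)).mp (hsat j)).1 i hadj.symm hlt
      have h2 := ((sat_psiV G i M (s i)).mp (hsat i)).2 j hadj hlt
      rw [Sym2.eq_swap] at h1
      exact h2 (hsij ▸ h1)
  · rintro ⟨c, hc⟩
    classical
    refine ⟨fun e v => ∃ i j : Fin n, G.Adj i j ∧ i < j ∧ e = s(i, j) ∧ v = (c i).succ,
      0, ?_⟩
    set M : Kripke (Sym2 (Fin n)) := Kripke.mk (Fin 4) ⟨0⟩ F3R
      (fun e v => ∃ i j : Fin n, G.Adj i j ∧ i < j ∧ e = s(i, j) ∧ v = (c i).succ) with hM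
    rw [sat_bigConj]
    rintro φ hφ
    obtain ⟨i, -, rfl⟩ := List.mem_map.mp hφ
    refine ⟨(c i).succ, ⟨rfl, Fin.succ_ne_zero _⟩, ?_⟩
    rw [sat_psiV]
    constructor
    · intro j hadj hlt
      exact ⟨i, j, hadj, hlt, rfl, rfl⟩
    · rintro j hadj hlt ⟨i', j', hadj', hlt', he, hv⟩
      rw [Sym2.eq_swap] at he
      obtain ⟨rfl, rfl⟩ := sym2_eq_of_lt hlt hlt' he
      have : c i = c j := Fin.succ_injective _ hv
      exact hc i j hadj this


end PoorMansModal
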